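/- Let m ≥ 3 be odd and q = 2. The code C = W([m/2],2) in H(m,2) has covering radius ρ = (m−1)/2, its cell C_ρ at maximal distance equals the repetition code Rep(m,2) = {(0,…,0),(1,…,1)}, and both C and C_ρ are completely transitive. -/

import Mathlib

open Equiv Pointwise

section HammingDefs

variable {I : Type*} [Fintype I] [DecidableEq I] {q : ℕ}

/-- The permutation of the vertex set of the Hamming graph `H(I,q)` induced by the
letter permutations `g i` (acting coordinatewise) followed by the coordinate
permutation `σ`:  `(α^x)_i = g_{σ⁻¹ i} (α_{σ⁻¹ i})`. -/
def tvp (g : I → Equiv.Perm (Fin q)) (σ : Equiv.Perm I) : Equiv.Perm (I → Fin q) where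
  toFun α i := g (σ⁻¹ i) (α (σ⁻¹ i))
  invFun β i := (g i)⁻¹ (β (σ i))
  left_inv α := by funext i; simp
  right_inv β := by funext i; simp

/-- The automorphism group of the Hamming graph `H(I,q)`: all permutations of the
vertex set preserving adjacency (Hamming distance 1). -/
def autH (I : Type*) [Fintype I] [DecidableEq I] (q : ℕ) :
    Subgroup (Equiv.Perm (I → Fin q)) where
  carrier := {y | ∀ α β : I → Fin q, hammingDist (y α) (y β) = 1 ↔ hammingDist α β = 1}
  one_mem' := by intro α β; simp
  mul_mem' := by
    intro a b ha hb α β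
    rw [Equiv.Perm.mul_apply, Equiv.Perm.mul_apply, ha, hb]
  inv_mem' := by
    intro a ha α β
    simpa using (ha (a⁻¹ α) (a⁻¹ β)).symm

/-- The homomorphism `S_q × S_I → Sym(V(H(I,q)))` whose image is `Diag(S_q) ⋊ L`. -/
def diagLHom (I : Type*) [Fintype I] [DecidableEq I] (q : ℕ) :
    Equiv.Perm (Fin q) × Equiv.Perm I →* Equiv.Perm (I → Fin q) where
  toFun x := tvp (fun _ => x.1) x.2
  map_one' := by
    ext α i
    simp [tvp]
  map_mul' x y := by
    ext α i
    simp [tvp, mul_inv_rev]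

/-- The subgroup `Diag_I(S_q) ⋊ L` of the automorphism group of `H(I,q)`. -/
def diagL (I : Type*) [Fintype I] [DecidableEq I] (q : ℕ) :
    Subgroup (Equiv.Perm (I → Fin q)) :=
  (diagLHom I q).range

/-- The subgroup `L` of pure coordinate permutations of `H(I,q)`. -/
def permL (I : Type*) [Fintype I] [DecidableEq I] (q : ℕ) :
    Subgroup (Equiv.Perm (I → Fin q)) :=
  ((diagLHom I q).comp (MonoidHom.inr (Equiv.Perm (Fin q)) (Equiv.Perm I))).range

/-- Distance from a vertex to a code. -/
noncomputable def distC (γ : I → Fin q) (C : Set (I → Fin q)) : ℕ :=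
  sInf {d | ∃ β ∈ C, hammingDist γ β = d}

/-- The cell `C_i` of the distance partition of the code `C`. -/
def cell (C : Set (I → Fin q)) (i : ℕ) : Set (I → Fin q) :=
  {γ | distC γ C = i}

/-- The covering radius of the code `C`. -/
noncomputable def covRad (C : Set (I → Fin q)) : ℕ :=
  sSup {d | ∃ γ : I → Fin q, distC γ C = d}

/-- The minimum distance of the code `C`. -/
noncomputable def minDist (C : Set (I → Fin q)) : ℕ :=
  sInf {d | ∃ β ∈ C, ∃ γ ∈ C, β ≠ γ ∧ hammingDist β γ = d}

/-- `S` is an orbit of the subgroup `X` of permutations of the vertex set. -/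
def IsOrbitOf (X : Subgroup (Equiv.Perm (I → Fin q))) (S : Set (I → Fin q)) : Prop :=
  ∃ v, S = {w | ∃ x ∈ X, x v = w}

/-- `C` is `X`-neighbour transitive: `X` is a group of automorphisms of the Hamming
graph, and both `C` and its set of neighbours `C_1` are `X`-orbits. -/
def NbrTransitive (X : Subgroup (Equiv.Perm (I → Fin q))) (C : Set (I → Fin q)) : Prop :=
  X ≤ autH I q ∧ IsOrbitOf X C ∧ IsOrbitOf X (cell C 1)

/-- `C` is `X`-completely transitive: every cell of the distance partition is an `X`-orbit. -/
def ComplTransitive (X : Subgroup (Equiv.Perm (I → Fin q))) (C : Set (I → Fin q)) : Prop :=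
  X ≤ autH I q ∧ ∀ i ≤ covRad C, IsOrbitOf X (cell C i)

/-- `C` is diagonally `X`-neighbour transitive. -/
def DiagNbrTransitive (X : Subgroup (Equiv.Perm (I → Fin q))) (C : Set (I → Fin q)) : Prop :=
  NbrTransitive X C ∧ X ≤ diagL I q

/-- The automorphism group of the code `C`: the setwise stabiliser of `C` in the
automorphism group of the Hamming graph. -/
def autCode (C : Set (I → Fin q)) : Subgroup (Equiv.Perm (I → Fin q)) :=
  autH I q ⊓ MulAction.stabilizer (Equiv.Perm (I → Fin q)) C

/-- Number of occurrences of the letter `a` in the vertex `α`. -/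
def cnt (α : I → Fin q) (a : Fin q) : ℕ :=
  (Finset.univ.filter fun i => α i = a).card

/-- The composition `Q(α)` of a vertex: the set of pairs `(a, p)` such that the letter `a`
occurs exactly `p > 0` times in `α`. -/
def compOf (α : I → Fin q) : Set (Fin q × ℕ) :=
  {x | 0 < x.2 ∧ cnt α x.1 = x.2}

/-- `Num(α)`: the set of pairs `(p, s)` such that exactly `s > 0` distinct letters occur
exactly `p > 0` times in `α`. -/
def numOf (α : I → Fin q) : Set (ℕ × ℕ) :=
  {x | 0 < x.1 ∧ 0 < x.2 ∧ (Finset.univ.filter fun a => cnt α a = x.1).card = x.2}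

/-- The repetition code `Rep(I,q)`. -/
def repCode (I : Type*) [Fintype I] [DecidableEq I] (q : ℕ) : Set (I → Fin q) :=
  {α | ∃ a, α = fun _ => a}

/-- The injection code `Inj(I,q)`: all tuples with pairwise distinct entries. -/
def injCode (I : Type*) [Fintype I] [DecidableEq I] (q : ℕ) : Set (I → Fin q) :=
  {α | Function.Injective α}

/-- The code `All(pq,q)`: all vertices in which every letter occurs exactly `p` times. -/
def allCode (I : Type*) [Fintype I] [DecidableEq I] (q p : ℕ) : Set (I → Fin q) :=
  {α | ∀ a, cnt α a = p}

/-- `C` is `s`-regular. -/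
def RegularUpTo (C : Set (I → Fin q)) (s : ℕ) : Prop :=
  ∀ i ≤ s, ∀ γ ∈ cell C i, ∀ γ' ∈ cell C i, ∀ k : ℕ,
    {β ∈ C | hammingDist γ β = k}.ncard = {β ∈ C | hammingDist γ' β = k}.ncard

/-- `C` is completely regular. -/
def ComplRegular (C : Set (I → Fin q)) : Prop :=
  RegularUpTo C (covRad C)

/-- `C` is a constant composition code: every letter occurs the same positive number of
times in every codeword. -/
def IsCCC (C : Set (I → Fin q)) : Prop :=
  C.Nonempty ∧ ∃ f : Fin q → ℕ, (∀ a, 0 < f a) ∧ ∀ β ∈ C, ∀ a, cnt β a = f a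

end HammingDefs

section Weight

/-- The weight of a binary vertex: number of nonzero entries. -/
def wt {m : ℕ} (α : Fin m → Fin 2) : ℕ :=
  (Finset.univ.filter fun i => α i ≠ 0).card

/-- The code `W([m/2],2)`: binary `m`-tuples of weight `(m+1)/2` or `(m-1)/2`. -/
def wCode (m : ℕ) : Set (Fin m → Fin 2) :=
  {α | wt α = (m+1)/2 ∨ wt α = (m-1)/2}

/-- The code `W([m/2],2)` over a general alphabet (used when `q = 2`): vertices in which
one letter occurs `(m+1)/2` times and another `(m-1)/2` times. -/
def wCodeGen (m q : ℕ) : Set (Fin m → Fin q) :=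
  {α | ∃ a b : Fin q, a ≠ b ∧ cnt α a = (m+1)/2 ∧ cnt α b = (m-1)/2}

end Weight

section PermCodes

/-- The vertex `α(g) = (1^g, …, q^g)` of `H(q,q)` associated with a permutation `g`. -/
def alphaVtx {q : ℕ} (g : Equiv.Perm (Fin q)) : Fin q → Fin q := fun i => g i

/-- The permutation code generated by a set `T` of permutations. -/
def permCode {q : ℕ} (T : Set (Equiv.Perm (Fin q))) : Set (Fin q → Fin q) :=
  alphaVtx '' T

end PermCodes

section Repetition

variable {I : Type*} [Fintype I] [DecidableEq I] {q : ℕ}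

/-- The `p`-fold repetition `rep_p(α) = (α,…,α)`, a vertex of `H(p·|I|, q)`. -/
def repv (p : ℕ) (α : I → Fin q) : Fin p × I → Fin q := fun ji => α ji.2

/-- The `p`-fold repetition code `Rep_p(C)`. -/
def repCodeP (p : ℕ) (C : Set (I → Fin q)) : Set (Fin p × I → Fin q) :=
  repv p '' C

/-- The homomorphism `Sym(V(H(I,q))) × S_p → Sym(V(H(p·|I|,q)))`: the pair `(x,σ)` acts on
`p`-tuples of vertices by `(α_1,…,α_p) ↦ (α_{σ⁻¹(1)}^x, …, α_{σ⁻¹(p)}^x)`. -/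
def repHom (p : ℕ) (I : Type*) [Fintype I] [DecidableEq I] (q : ℕ) :
    Equiv.Perm (I → Fin q) × Equiv.Perm (Fin p) →* Equiv.Perm (Fin p × I → Fin q) where
  toFun x :=
    { toFun := fun β ji => x.1 (fun i => β (x.2⁻¹ ji.1, i)) ji.2
      invFun := fun β ji => x.1⁻¹ (fun i => β (x.2 ji.1, i)) ji.2
      left_inv := by intro β; funext ji; simp
      right_inv := by intro β; funext ji; simp }
  map_one' := by ext β ji; simp
  map_mul' x y := by ext β ji; simp [mul_inv_rev]

end Repetition
section AuxProof

variable {m : ℕ}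

lemma fin2_ne_zero_eq_one {a : Fin 2} (h : a ≠ 0) : a = 1 := by fin_cases a <;> simp_all

lemma fin2_eq_of_iff {a b : Fin 2} (h : a ≠ 0 ↔ b ≠ 0) : a = b := by
  fin_cases a <;> fin_cases b <;> simp_all

lemma hD_eq (α β : Fin m → Fin 2) :
    hammingDist α β = (Finset.univ.filter fun i => α i ≠ β i).card := rfl

lemma wt_le_card (α : Fin m → Fin 2) : wt α ≤ m := by
  simpa [wt] using Finset.card_filter_le Finset.univ (fun i => α i ≠ 0)

lemma wt_le_wt_add_hD (α β : Fin m → Fin 2) : wt α ≤ wt β + hammingDist α β := by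
  rw [wt, wt, hD_eq]
  refine le_trans (Finset.card_le_card ?_) (Finset.card_union_le _ _)
  intro i hi
  simp only [Finset.mem_filter, Finset.mem_univ, true_and, Finset.mem_union] at hi ⊢
  by_cases h : β i = 0
  · exact Or.inr (by rw [h]; exact hi)
  · exact Or.inl h

lemma card_filter_zero (α : Fin m → Fin 2) :
    (Finset.univ.filter fun i => α i = 0).card = m - wt α := by
  have h := Finset.card_filter_add_card_filter_not (s := (Finset.univ : Finset (Fin m)))
    (p := fun i => α i = 0)
  simp only [Finset.card_univ, Fintype.card_fin] at h
  have hwt : (Finset.univ.filter fun a => ¬ α a = 0).card = wt α := rfl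
  omega

lemma exists_wt_le (γ : Fin m → Fin 2) (t : ℕ) (ht : t ≤ wt γ) :
    ∃ β, wt β = t ∧ hammingDist γ β = wt γ - t := by
  obtain ⟨S, hS, hcard⟩ := Finset.exists_subset_card_eq (s := Finset.univ.filter fun i => γ i ≠ 0) (n := t) (by exact ht)
  refine ⟨fun i => if i ∈ S then 1 else 0, ?_, ?_⟩
  · rw [← hcard]
    show (Finset.univ.filter fun i => (if i ∈ S then (1:Fin 2) else 0) ≠ 0).card = S.card
    congr 1
    ext i
    by_cases h : i ∈ S <;> simp [h]
  · rw [hD_eq]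
    have : (Finset.univ.filter fun i => γ i ≠ (if i ∈ S then (1:Fin 2) else 0))
        = (Finset.univ.filter fun i => γ i ≠ 0) \ S := by
      ext i
      by_cases h : i ∈ S
      · have hγ : γ i ≠ 0 := by
          have := hS h; simpa using this
        simp [h, fin2_ne_zero_eq_one hγ, hγ]
      · simp [h]
    rw [this, Finset.card_sdiff_of_subset hS, hcard]
    rfl

lemma exists_wt_ge (γ : Fin m → Fin 2) (t : ℕ) (h1 : wt γ ≤ t) (h2 : t ≤ m) :
    ∃ β, wt β = t ∧ hammingDist γ β = t - wt γ := by
  obtain ⟨S, hS, hcard⟩ := Finset.exists_subset_card_eq (s := Finset.univ.filter fun i => γ i = 0)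
    (n := t - wt γ) (by rw [card_filter_zero]; omega)
  refine ⟨fun i => if i ∈ S then 1 else γ i, ?_, ?_⟩
  · show (Finset.univ.filter fun i => (if i ∈ S then (1:Fin 2) else γ i) ≠ 0).card = t
    have : (Finset.univ.filter fun i => (if i ∈ S then (1:Fin 2) else γ i) ≠ 0)
        = (Finset.univ.filter fun i => γ i ≠ 0) ∪ S := by
      ext i
      by_cases h : i ∈ S
      · have : γ i = 0 := by have := hS h; simpa using this
        simp [h]
      · simp [h]
    rw [this, Finset.card_union_of_disjoint, hcard]
    · have : (Finset.univ.filter fun i => γ i ≠ 0).card = wt γ := rfl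
      omega
    · rw [Finset.disjoint_left]
      intro i hi hiS
      have := hS hiS
      simp_all
  · rw [hD_eq]
    have : (Finset.univ.filter fun i => γ i ≠ (if i ∈ S then (1:Fin 2) else γ i)) = S := by
      ext i
      by_cases h : i ∈ S
      · have : γ i = 0 := by have := hS h; simpa using this
        simp [h, this]
      · simp [h]
    rw [this, hcard]

lemma exists_wt (t : ℕ) (h2 : t ≤ m) : ∃ β : Fin m → Fin 2, wt β = t := by
  have h0 : wt (fun _ : Fin m => (0 : Fin 2)) = 0 := by simp [wt]
  obtain ⟨β, hβ, -⟩ := exists_wt_ge (fun _ : Fin m => (0:Fin 2)) t (by omega) h2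
  exact ⟨β, hβ⟩

end AuxProof

section AuxProof2

variable {m : ℕ}

lemma mem_wCode_iff (k : ℕ) (hk : m = 2*k+1) (β : Fin m → Fin 2) :
    β ∈ wCode m ↔ (wt β = k + 1 ∨ wt β = k) := by
  have h1 : (m+1)/2 = k+1 := by omega
  have h2 : (m-1)/2 = k := by omega
  simp [wCode, Set.mem_setOf_eq, h1, h2]

lemma distC_wCode (k : ℕ) (hk : m = 2*k+1) (γ : Fin m → Fin 2) :
    distC γ (wCode m) = if wt γ ≤ k then k - wt γ else wt γ - (k+1) := by
  have hmem : ∀ d, (∃ β ∈ wCode m, hammingDist γ β = d) →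
      (if wt γ ≤ k then k - wt γ else wt γ - (k+1)) ≤ d := by
    rintro d ⟨β, hβ, rfl⟩
    rw [mem_wCode_iff k hk] at hβ
    have h1 := wt_le_wt_add_hD γ β
    have h2 := wt_le_wt_add_hD β γ
    rw [hammingDist_comm β γ] at h2
    split <;> omega
  apply le_antisymm
  · by_cases h : wt γ ≤ k
    · obtain ⟨β, hβw, hβd⟩ := exists_wt_ge γ k h (by omega)
      have he : (if wt γ ≤ k then k - wt γ else wt γ - (k+1)) = k - wt γ := by simp [h]
      rw [he, ← hβd]
      exact Nat.sInf_le ⟨β, (mem_wCode_iff k hk β).2 (Or.inr hβw), rfl⟩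
    · obtain ⟨β, hβw, hβd⟩ := exists_wt_le γ (k+1) (by omega)
      have he : (if wt γ ≤ k then k - wt γ else wt γ - (k+1)) = wt γ - (k+1) := by simp [h]
      rw [he, ← hβd]
      exact Nat.sInf_le ⟨β, (mem_wCode_iff k hk β).2 (Or.inl hβw), rfl⟩
  · apply le_csInf
    · obtain ⟨β, hβw⟩ := exists_wt (m := m) k (by omega)
      exact ⟨_, β, (mem_wCode_iff k hk β).2 (Or.inr hβw), rfl⟩
    · exact fun d hd => hmem d hd

lemma wt_zero_fun : wt (fun _ : Fin m => (0 : Fin 2)) = 0 := by simp [wt]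

lemma covRad_wCode (k : ℕ) (hk : m = 2*k+1) : covRad (wCode m) = k := by
  have hbound : ∀ d ∈ {d | ∃ γ : Fin m → Fin 2, distC γ (wCode m) = d}, d ≤ k := by
    rintro d ⟨γ, rfl⟩
    rw [distC_wCode k hk]
    have := wt_le_card γ
    split <;> omega
  apply le_antisymm
  · apply csSup_le
    · exact ⟨_, (fun _ => 0), rfl⟩
    · exact hbound
  · apply le_csSup ⟨k, hbound⟩
    refine ⟨fun _ => 0, ?_⟩
    rw [distC_wCode k hk, wt_zero_fun]
    simp

lemma cell_wCode (k i : ℕ) (hk : m = 2*k+1) (hi : i ≤ k) :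
    cell (wCode m) i = {γ | wt γ = k - i ∨ wt γ = k + 1 + i} := by
  ext γ
  simp only [cell, Set.mem_setOf_eq, distC_wCode k hk]
  have := wt_le_card γ
  split <;> omega

lemma wt_eq_zero_iff (γ : Fin m → Fin 2) : wt γ = 0 ↔ γ = fun _ => 0 := by
  constructor
  · intro h
    funext i
    by_contra hne
    have hmem : i ∈ Finset.univ.filter fun j => γ j ≠ 0 := by simpa using hne
    rw [wt, Finset.card_eq_zero] at h
    simp [h] at hmem
  · rintro rfl; exact wt_zero_fun

lemma wt_eq_card_iff (γ : Fin m → Fin 2) : wt γ = m ↔ γ = fun _ => 1 := by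
  constructor
  · intro h
    funext i
    have huniv : (Finset.univ.filter fun j => γ j ≠ 0) = Finset.univ := by
      apply Finset.eq_univ_of_card
      simpa [wt] using h
    have hne : γ i ≠ 0 := by
      have hmem : i ∈ Finset.univ.filter fun j => γ j ≠ 0 := by
        rw [huniv]; exact Finset.mem_univ i
      simpa using hmem
    exact fin2_ne_zero_eq_one hne
  · rintro rfl
    rw [wt]
    simp

lemma mem_repCode_iff (β : Fin m → Fin 2) :
    β ∈ repCode (Fin m) 2 ↔ β = (fun _ => 0) ∨ β = (fun _ => 1) := by
  constructor
  · rintro ⟨a, rfl⟩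
    fin_cases a
    · exact Or.inl rfl
    · exact Or.inr rfl
  · rintro (rfl | rfl)
    · exact ⟨0, rfl⟩
    · exact ⟨1, rfl⟩

lemma cell_wCode_rho (k : ℕ) (hk : m = 2*k+1) : cell (wCode m) k = repCode (Fin m) 2 := by
  rw [cell_wCode k k hk le_rfl]
  ext γ
  rw [Set.mem_setOf_eq, mem_repCode_iff]
  have h1 : k - k = 0 := by omega
  have h2 : k + 1 + k = m := by omega
  rw [h1, h2, wt_eq_zero_iff, wt_eq_card_iff]

lemma fin2_ne_one_iff : ∀ a : Fin 2, (a ≠ 1 ↔ a = 0) := by decide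

lemma hD_const_zero (γ : Fin m → Fin 2) : hammingDist γ (fun _ => (0:Fin 2)) = wt γ := rfl

lemma hD_const_one (γ : Fin m → Fin 2) : hammingDist γ (fun _ => (1:Fin 2)) = m - wt γ := by
  rw [hD_eq, ← card_filter_zero γ]
  congr 1
  ext i
  simp [fin2_ne_one_iff]

lemma distC_repCode (k : ℕ) (hk : m = 2*k+1) (γ : Fin m → Fin 2) :
    distC γ (repCode (Fin m) 2) = if wt γ ≤ k then wt γ else m - wt γ := by
  apply le_antisymm
  · split_ifs with h
    · exact Nat.sInf_le ⟨fun _ => 0, (mem_repCode_iff _).2 (Or.inl rfl), hD_const_zero γ⟩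
    · exact Nat.sInf_le ⟨fun _ => 1, (mem_repCode_iff _).2 (Or.inr rfl), hD_const_one γ⟩
  · have hne : {d | ∃ β ∈ repCode (Fin m) 2, hammingDist γ β = d}.Nonempty :=
      ⟨wt γ, fun _ => 0, (mem_repCode_iff _).2 (Or.inl rfl), hD_const_zero γ⟩
    apply le_csInf hne
    rintro d ⟨β, hβ, rfl⟩
    have hle := wt_le_card γ
    rcases (mem_repCode_iff β).1 hβ with rfl | rfl
    · rw [hD_const_zero]; split <;> omega
    · rw [hD_const_one]; split <;> omega

lemma covRad_repCode (k : ℕ) (hk : m = 2*k+1) : covRad (repCode (Fin m) 2) = k := by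
  have hbound : ∀ d ∈ {d | ∃ γ : Fin m → Fin 2, distC γ (repCode (Fin m) 2) = d}, d ≤ k := by
    rintro d ⟨γ, rfl⟩
    rw [distC_repCode k hk]
    have := wt_le_card γ
    split <;> omega
  apply le_antisymm
  · exact csSup_le ⟨_, (fun _ => 0), rfl⟩ hbound
  · apply le_csSup ⟨k, hbound⟩
    obtain ⟨γ, hγ⟩ := exists_wt (m := m) k (by omega)
    refine ⟨γ, ?_⟩
    rw [distC_repCode k hk, hγ]
    simp

lemma cell_repCode (k i : ℕ) (hk : m = 2*k+1) (hi : i ≤ k) :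
    cell (repCode (Fin m) 2) i = {γ | wt γ = i ∨ wt γ = m - i} := by
  ext γ
  simp only [cell, Set.mem_setOf_eq, distC_repCode k hk]
  have := wt_le_card γ
  split <;> omega

end AuxProof2

section AuxProof3

variable {m : ℕ}

lemma card_filter_perm (σ : Equiv.Perm (Fin m)) (P : Fin m → Prop) [DecidablePred P] :
    (Finset.univ.filter fun i => P (σ i)).card = (Finset.univ.filter P).card := by
  apply Finset.card_bij' (fun i _ => σ i) (fun j _ => σ⁻¹ j) <;> simp

lemma tvp_apply (g : Fin m → Equiv.Perm (Fin 2)) (σ : Equiv.Perm (Fin m))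
    (α : Fin m → Fin 2) (i : Fin m) : tvp g σ α i = g (σ⁻¹ i) (α (σ⁻¹ i)) := rfl

lemma diagLHom_apply (g : Equiv.Perm (Fin 2)) (σ : Equiv.Perm (Fin m)) :
    (diagLHom (Fin m) 2 (g, σ) : Equiv.Perm (Fin m → Fin 2)) = tvp (fun _ => g) σ := rfl

lemma hD_tvp (g : Fin m → Equiv.Perm (Fin 2)) (σ : Equiv.Perm (Fin m)) (α β : Fin m → Fin 2) :
    hammingDist (tvp g σ α) (tvp g σ β) = hammingDist α β := by
  rw [hD_eq, hD_eq]
  have h1 : (Finset.univ.filter fun i => tvp g σ α i ≠ tvp g σ β i)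
      = Finset.univ.filter fun i => α (σ⁻¹ i) ≠ β (σ⁻¹ i) := by
    apply Finset.filter_congr
    intro i _
    simp [tvp_apply]
  rw [h1]
  exact card_filter_perm σ⁻¹ (fun j => α j ≠ β j)

lemma diagL_le_autH : diagL (Fin m) 2 ≤ autH (Fin m) 2 := by
  intro y hy
  obtain ⟨⟨g, σ⟩, rfl⟩ := hy
  intro α β
  rw [diagLHom_apply, hD_tvp]

lemma perm_fin2_cases : ∀ g : Equiv.Perm (Fin 2), g = 1 ∨ g = Equiv.swap 0 1 := by decide

lemma swap_fin2_ne_zero : ∀ a : Fin 2, (Equiv.swap (0:Fin 2) 1 a ≠ 0 ↔ a = 0) := by decide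

lemma wt_diag_apply (g : Equiv.Perm (Fin 2)) (σ : Equiv.Perm (Fin m)) (v : Fin m → Fin 2) :
    wt (tvp (fun _ => g) σ v) = wt v ∨ wt (tvp (fun _ => g) σ v) = m - wt v := by
  have hwt : wt (tvp (fun _ => g) σ v)
      = (Finset.univ.filter fun i => g (v (σ⁻¹ i)) ≠ 0).card := rfl
  rcases perm_fin2_cases g with rfl | rfl
  · left
    rw [hwt]
    exact card_filter_perm σ⁻¹ (fun j => v j ≠ 0)
  · right
    rw [hwt]
    have h1 : (Finset.univ.filter fun i => Equiv.swap (0:Fin 2) 1 (v (σ⁻¹ i)) ≠ 0)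
        = Finset.univ.filter fun i => v (σ⁻¹ i) = 0 := by
      apply Finset.filter_congr
      intro i _
      simpa using swap_fin2_ne_zero (v (σ⁻¹ i))
    rw [h1, card_filter_perm σ⁻¹ (fun j => v j = 0), card_filter_zero]

lemma exists_perm_wt_eq {v β : Fin m → Fin 2} (h : wt β = wt v) :
    ∃ σ : Equiv.Perm (Fin m), ∀ i, v (σ i) = β i := by
  classical
  have h1 : Fintype.card {i // β i ≠ 0} = Fintype.card {i // v i ≠ 0} := by
    simp only [Fintype.card_subtype]
    exact h
  have h2 : Fintype.card {i // ¬ β i ≠ 0} = Fintype.card {i // ¬ v i ≠ 0} := by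
    simp only [not_not, Fintype.card_subtype]
    rw [card_filter_zero, card_filter_zero, h]
  let e1 := Fintype.equivOfCardEq h1
  let e2 := Fintype.equivOfCardEq h2
  refine ⟨(Equiv.sumCompl (fun i => β i ≠ 0)).symm.trans
    ((e1.sumCongr e2).trans (Equiv.sumCompl (fun i => v i ≠ 0))), ?_⟩
  intro i
  by_cases hb : β i ≠ 0
  · have hs : (Equiv.sumCompl fun i => β i ≠ 0).symm i = Sum.inl ⟨i, hb⟩ :=
      Equiv.sumCompl_symm_apply_of_pos (p := fun j => β j ≠ 0) (a := i) hb
    simp only [Equiv.trans_apply, hs, Equiv.sumCongr_apply, Sum.map_inl,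
      Equiv.sumCompl_apply_inl]
    exact fin2_eq_of_iff (by simp [(e1 ⟨i, hb⟩).2, hb])
  · have hs : (Equiv.sumCompl fun i => β i ≠ 0).symm i = Sum.inr ⟨i, hb⟩ :=
      Equiv.sumCompl_symm_apply_of_neg (p := fun j => β j ≠ 0) (a := i) hb
    simp only [Equiv.trans_apply, hs, Equiv.sumCongr_apply, Sum.map_inr,
      Equiv.sumCompl_apply_inr]
    have hv0 : ¬ (v ((e2 ⟨i, hb⟩ : {j // ¬ v j ≠ 0}) : Fin m) ≠ 0) := (e2 ⟨i, hb⟩).2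
    rw [not_not.1 hv0, not_not.1 hb]

lemma mem_orbit_diagL_iff (v β : Fin m → Fin 2) :
    (∃ x ∈ diagL (Fin m) 2, x v = β) ↔ (wt β = wt v ∨ wt β = m - wt v) := by
  constructor
  · rintro ⟨x, hx, rfl⟩
    obtain ⟨⟨g, σ⟩, rfl⟩ := hx
    rw [diagLHom_apply]
    exact wt_diag_apply g σ v
  · rintro (h | h)
    · obtain ⟨σ, hσ⟩ := exists_perm_wt_eq h
      refine ⟨diagLHom (Fin m) 2 (1, σ⁻¹), ⟨(1, σ⁻¹), rfl⟩, ?_⟩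
      funext i
      rw [diagLHom_apply, tvp_apply]
      simp [hσ i]
    · have hβ' : wt (fun i => Equiv.swap (0:Fin 2) 1 (β i)) = wt v := by
        have : (Finset.univ.filter fun i => Equiv.swap (0:Fin 2) 1 (β i) ≠ 0)
            = Finset.univ.filter fun i => β i = 0 := by
          apply Finset.filter_congr
          intro i _
          simpa using swap_fin2_ne_zero (β i)
        rw [wt]
        rw [this, card_filter_zero]
        have := wt_le_card β
        have := wt_le_card v
        omega
      obtain ⟨σ, hσ⟩ := exists_perm_wt_eq hβ'
      refine ⟨diagLHom (Fin m) 2 (Equiv.swap 0 1, σ⁻¹), ⟨(Equiv.swap 0 1, σ⁻¹), rfl⟩, ?_⟩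
      funext i
      rw [diagLHom_apply, tvp_apply]
      simp only [inv_inv]
      rw [hσ i, Equiv.swap_apply_self]

lemma isOrbit_wt_pair (a : ℕ) (ha : a ≤ m) :
    IsOrbitOf (diagL (Fin m) 2) {γ | wt γ = a ∨ wt γ = m - a} := by
  obtain ⟨v, hv⟩ := exists_wt a ha
  refine ⟨v, ?_⟩
  ext β
  rw [Set.mem_setOf_eq, Set.mem_setOf_eq, mem_orbit_diagL_iff, hv]

end AuxProof3

/-- Corollary 3.4(i): for odd `m ≥ 3`, the code `C = W([m/2],2)` has
covering radius `ρ = (m-1)/2`, its cell `C_ρ` equals the binary repetition code, and both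
`C` and `C_ρ` are completely transitive. -/
theorem wCode_covering_radius (m : ℕ) (hm : 3 ≤ m) (hodd : Odd m) :
    covRad (wCode m) = (m - 1) / 2 ∧
    cell (wCode m) ((m - 1) / 2) = repCode (Fin m) 2 ∧
    (∃ X : Subgroup (Equiv.Perm (Fin m → Fin 2)), ComplTransitive X (wCode m)) ∧
    (∃ X : Subgroup (Equiv.Perm (Fin m → Fin 2)),
      ComplTransitive X (cell (wCode m) ((m - 1) / 2))) := by
  obtain ⟨k, hk⟩ := hodd
  have hhalf : (m - 1) / 2 = k := by omega
  refine ⟨?_, ?_, ?_, ?_⟩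
  · rw [hhalf]; exact covRad_wCode k hk
  · rw [hhalf]; exact cell_wCode_rho k hk
  · refine ⟨diagL (Fin m) 2, diagL_le_autH, ?_⟩
    intro i hi
    rw [covRad_wCode k hk] at hi
    rw [cell_wCode k i hk hi]
    have h2 : k + 1 + i = m - (k - i) := by omega
    rw [h2]
    exact isOrbit_wt_pair (k - i) (by omega)
  · refine ⟨diagL (Fin m) 2, ?_⟩
    rw [hhalf, cell_wCode_rho k hk]
    refine ⟨diagL_le_autH, ?_⟩
    intro i hi
    rw [covRad_repCode k hk] at hi
    rw [cell_repCode k i hk hi]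
    exact isOrbit_wt_pair i (by omega)
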